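/- Under the hypotheses of the zero-temperature theorem (upper semi-continuous entropy, finite topological entropy, β(Φ) > -∞), if μ is a weak-* accumulation point of equilibrium states (μ_t) as t → ∞, then χ(μ,Φ) = lim_{t→∞} χ(μ_t,Φ). -/

import Mathlib

open MeasureTheory Filter Topology Set
open scoped ENNReal NNReal

/-- Positive part of an extended real, as an extended nonnegative real. -/
noncomputable def EReal.posPart (a : EReal) : ℝ≥0∞ :=
  if a = ⊤ then ⊤ else ENNReal.ofReal a.toReal

/-- `EReal`-valued logarithm of a real number: `elog r = -∞` for `r ≤ 0`. -/
noncomputable def elog (r : ℝ) : EReal := ENNReal.log (ENNReal.ofReal r)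

/-- The integral of an `EReal`-valued function, with values in `[-∞, ∞]`. -/
noncomputable def eint {X : Type*} [MeasurableSpace X] (μ : Measure X) (f : X → EReal) : EReal :=
  ((∫⁻ x, (f x).posPart ∂μ : ℝ≥0∞) : EReal) - ((∫⁻ x, (-f x).posPart ∂μ : ℝ≥0∞) : EReal)

/-- `Φ = {log φₙ}` is a subadditive potential for `T`: each `φₙ` is continuous,
nonnegative, and `φ_{n+m}(x) ≤ φₙ(x) · φₘ(Tⁿ x)`. -/
def SubadditivePotential {X : Type*} [TopologicalSpace X] (T : X → X) (φ : ℕ → X → ℝ) : Prop :=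
  (∀ n, 1 ≤ n → Continuous (φ n)) ∧ (∀ n x, 1 ≤ n → 0 ≤ φ n x) ∧
    (∀ m n : ℕ, 1 ≤ m → 1 ≤ n → ∀ x, φ (n + m) x ≤ φ n x * φ m (T^[n] x))


section AuxLemmas

@[simp] lemma EReal.posPart_top : EReal.posPart ⊤ = ⊤ := rfl
@[simp] lemma EReal.posPart_bot : EReal.posPart ⊥ = 0 := by simp [EReal.posPart]
@[simp] lemma EReal.posPart_coe (x : ℝ) : EReal.posPart ↑x = ENNReal.ofReal x := by
  simp [EReal.posPart]

lemma EReal.measurable_posPart : Measurable EReal.posPart := by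
  apply EReal.measurable_of_measurable_real
  simpa using ENNReal.measurable_ofReal

lemma EReal.measurable_negPosPart : Measurable (fun a : EReal => (-a).posPart) := by
  apply EReal.measurable_of_measurable_real
  have : (fun p : ℝ => (-(p:EReal)).posPart) = fun p : ℝ => ENNReal.ofReal (-p) := by
    funext p
    rw [show -(p:EReal) = ((-p : ℝ) : EReal) from (EReal.coe_neg p).symm, EReal.posPart_coe]
  rw [this]; exact ENNReal.measurable_ofReal.comp measurable_neg

lemma EReal.measurable_constSubPosPart (C : ℝ) :
    Measurable (fun a : EReal => ((C : EReal) - a).posPart) := by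
  apply EReal.measurable_of_measurable_real
  have : (fun p : ℝ => ((C : EReal) - (p:EReal)).posPart)
      = fun p : ℝ => ENNReal.ofReal (C - p) := by
    funext p
    rw [show (C : EReal) - (p : EReal) = ((C - p : ℝ) : EReal) from (EReal.coe_sub C p).symm,
      EReal.posPart_coe]
  rw [this]; exact ENNReal.measurable_ofReal.comp (measurable_const.sub measurable_id)

lemma EReal.posPart_mono : Monotone EReal.posPart := by
  intro a b hab
  induction a with
  | bot => simp
  | coe x =>
    induction b with
    | bot => simp at hab
    | coe y => simpa using ENNReal.ofReal_le_ofReal (EReal.coe_le_coe_iff.1 hab)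
    | top => simp
  | top => simp [top_le_iff.1 hab]

lemma measurable_elog : Measurable elog :=
  ENNReal.log_monotone.measurable.comp ENNReal.measurable_ofReal

lemma elog_mono : Monotone elog := fun _ _ h =>
  ENNReal.log_monotone (ENNReal.ofReal_le_ofReal h)

lemma elog_le_coe_log {r M : ℝ} (hM : 0 < M) (h : r ≤ M) : elog r ≤ ↑(Real.log M) := by
  calc elog r ≤ elog M := elog_mono h
  _ = ↑(Real.log M) := by unfold elog; rw [ENNReal.log_ofReal_of_pos hM]

lemma elog_mul {a b : ℝ} (ha : 0 ≤ a) : elog (a * b) = elog a + elog b := by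
  unfold elog; rw [ENNReal.ofReal_mul ha, ENNReal.log_mul_add]

lemma elog_coe_pos {r : ℝ} (hr : 0 < r) : elog r = ↑(Real.log r) := by
  unfold elog; rw [ENNReal.log_ofReal_of_pos hr]

lemma elog_nonpos {r : ℝ} (hr : r ≤ 0) : elog r = ⊥ := by
  unfold elog; rw [ENNReal.ofReal_of_nonpos hr, ENNReal.log_zero]

lemma posPart_key {C : ℝ} (hC : 0 ≤ C) {a : EReal} (ha : a ≤ (C : EReal)) :
    ((C : EReal) - a).posPart + a.posPart = ENNReal.ofReal C + (-a).posPart := by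
  induction a with
  | bot => simp [EReal.coe_sub_bot]
  | coe r =>
    have hr : r ≤ C := EReal.coe_le_coe_iff.1 ha
    rw [← EReal.coe_sub, ← EReal.coe_neg]
    simp only [EReal.posPart_coe]
    rcases le_or_gt 0 r with h0 | h0
    · rw [ENNReal.ofReal_of_nonpos (neg_nonpos.2 h0), add_zero,
        ← ENNReal.ofReal_add (by linarith) h0, sub_add_cancel]
    · rw [ENNReal.ofReal_of_nonpos h0.le, add_zero,
        ← ENNReal.ofReal_add hC (by linarith : (0:ℝ) ≤ -r)]
      ring_nf
  | top => simp at ha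

lemma EReal.sub_top' (a : EReal) : a - ⊤ = ⊥ := by
  show a + -⊤ = ⊥
  rw [EReal.neg_top, EReal.add_bot]

lemma coe_ennreal_eq {x : ℝ≥0∞} (hx : x ≠ ⊤) : (x : EReal) = ((x.toReal : ℝ) : EReal) := by
  lift x to ℝ≥0 using hx
  simp [EReal.coe_nnreal_eq_coe_real]

lemma posPart_add_split {C' C : ℝ} {a b : EReal} (ha : a ≤ (C' : EReal)) (hb : b ≤ (C : EReal)) :
    (((C' + C : ℝ) : EReal) - (a + b)).posPart
      = ((C' : EReal) - a).posPart + ((C : EReal) - b).posPart := by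
  induction a with
  | bot => rw [EReal.bot_add, EReal.coe_sub_bot, EReal.coe_sub_bot]; simp
  | coe ra =>
    induction b with
    | bot => rw [EReal.add_bot, EReal.coe_sub_bot, EReal.coe_sub_bot]; simp
    | coe rb =>
      rw [← EReal.coe_add, ← EReal.coe_sub, ← EReal.coe_sub, ← EReal.coe_sub]
      simp only [EReal.posPart_coe]
      rw [← ENNReal.ofReal_add (by linarith [EReal.coe_le_coe_iff.1 ha])
        (by linarith [EReal.coe_le_coe_iff.1 hb])]
      ring_nf
    | top => simp at hb
  | top => simp at ha

lemma coe_sub_coe_add (C' C : ℝ) (A B : ℝ≥0∞) :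
    ((C' + C : ℝ) : EReal) - ((A + B : ℝ≥0∞) : EReal)
      = (((C' : ℝ) : EReal) - (A : EReal)) + (((C : ℝ) : EReal) - (B : EReal)) := by
  rcases eq_or_ne A ⊤ with hA | hA
  · rw [hA]
    rw [show ((⊤ : ℝ≥0∞) + B) = ⊤ from by simp, EReal.coe_ennreal_top, EReal.sub_top',
      EReal.sub_top', EReal.bot_add]
  · rcases eq_or_ne B ⊤ with hB | hB
    · rw [hB]
      rw [show (A + (⊤:ℝ≥0∞)) = ⊤ from by simp, EReal.coe_ennreal_top, EReal.sub_top',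
        EReal.sub_top', EReal.add_bot]
    · have hAB : A + B ≠ ⊤ := ENNReal.add_ne_top.2 ⟨hA, hB⟩
      rw [coe_ennreal_eq hA, coe_ennreal_eq hB, coe_ennreal_eq hAB,
        ENNReal.toReal_add hA hB, ← EReal.coe_sub, ← EReal.coe_sub, ← EReal.coe_sub,
        ← EReal.coe_add, EReal.coe_eq_coe_iff]
      ring

lemma ereal_succ_mul {j : ℕ} (hj : 1 ≤ j) (a : EReal) :
    ((j : EReal) + 1) * a = (j : EReal) * a + a := by
  have hjpos : (0 : EReal) < (j : EReal) := by
    exact_mod_cast Nat.cast_pos.2 (lt_of_lt_of_le Nat.zero_lt_one hj)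
  have hj1pos : (0 : EReal) < (j : EReal) + 1 := by
    have : (0:EReal) < 1 := by norm_num
    calc (0:EReal) < (j:EReal) := hjpos
    _ ≤ (j:EReal) + 1 := by
        nth_rewrite 1 [← add_zero (j : EReal)]
        exact add_le_add le_rfl this.le
  induction a with
  | bot => rw [EReal.mul_bot_of_pos hj1pos, EReal.mul_bot_of_pos hjpos, EReal.add_bot]
  | coe r =>
    rw [← EReal.coe_coe_eq_natCast, ← EReal.coe_one, ← EReal.coe_add, ← EReal.coe_mul,
      ← EReal.coe_mul, ← EReal.coe_add, EReal.coe_eq_coe_iff]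
    ring
  | top => rw [EReal.mul_top_of_pos hj1pos, EReal.mul_top_of_pos hjpos]; rfl

variable {X : Type*} [MeasurableSpace X]

lemma eint_eq (ν : Measure X) [IsProbabilityMeasure ν] {f : X → EReal} (hm : Measurable f)
    {C : ℝ} (hC : 0 ≤ C) (hf : ∀ x, f x ≤ (C : EReal)) :
    eint ν f = (C : EReal) - ((∫⁻ x, ((C : EReal) - f x).posPart ∂ν : ℝ≥0∞) : EReal) := by
  have hmp : Measurable fun x => (f x).posPart := EReal.measurable_posPart.comp hm
  set U := ∫⁻ x, ((C : EReal) - f x).posPart ∂ν with hUdef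
  set Pp := ∫⁻ x, (f x).posPart ∂ν with hPdef
  set N := ∫⁻ x, (-f x).posPart ∂ν with hNdef
  have key : U + Pp = ENNReal.ofReal C + N := by
    rw [hUdef, hPdef, hNdef, ← lintegral_add_right _ hmp]
    have : ∀ x, ((C : EReal) - f x).posPart + (f x).posPart
        = ENNReal.ofReal C + (-f x).posPart := fun x => posPart_key hC (hf x)
    rw [lintegral_congr this, lintegral_add_left measurable_const]
    simp
  have hPle : Pp ≤ ENNReal.ofReal C := by
    calc Pp ≤ ∫⁻ _, ENNReal.ofReal C ∂ν := lintegral_mono fun x => by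
            simpa using EReal.posPart_mono (hf x)
      _ = ENNReal.ofReal C := by simp
  have hPt : Pp ≠ ⊤ := (lt_of_le_of_lt hPle ENNReal.ofReal_lt_top).ne
  show (Pp : EReal) - (N : EReal) = (C : EReal) - (U : EReal)
  rcases eq_or_ne N ⊤ with hN | hN
  · have hU : U = ⊤ := by
      have htot : U + Pp = ⊤ := by rw [key, hN]; exact ENNReal.add_eq_top.2 (Or.inr rfl)
      rcases ENNReal.add_eq_top.1 htot with hh | hh
      · exact hh
      · exact absurd hh hPt
    rw [hN, hU, EReal.coe_ennreal_top, EReal.sub_top', EReal.sub_top']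
  · have hUt : U ≠ ⊤ := by
      intro hU
      have htot : (⊤ : ℝ≥0∞) = ENNReal.ofReal C + N := by rw [← key, hU]; simp
      exact ENNReal.add_ne_top.2 ⟨ENNReal.ofReal_ne_top, hN⟩ htot.symm
    have hreal : U.toReal + Pp.toReal = C + N.toReal := by
      have h2 := congrArg ENNReal.toReal key
      rwa [ENNReal.toReal_add hUt hPt, ENNReal.toReal_add ENNReal.ofReal_ne_top hN,
        ENNReal.toReal_ofReal hC] at h2
    rw [coe_ennreal_eq hPt, coe_ennreal_eq hN, coe_ennreal_eq hUt,
      ← EReal.coe_sub, ← EReal.coe_sub, EReal.coe_eq_coe_iff]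
    linarith

lemma map_iterate_invariant {T : X → X} (hTm : Measurable T) {ν : Measure X}
    [IsProbabilityMeasure ν] (hinv : Measure.map T ν = ν) (m : ℕ) :
    Measure.map (T^[m]) ν = ν := by
  induction m with
  | zero => simp [Measure.map_id]
  | succ m ih =>
    rw [Function.iterate_succ, ← Measure.map_map (hTm.iterate m) hTm, hinv, ih]

lemma lintegral_iterate_comp {T : X → X} (hTm : Measurable T) {ν : Measure X}
    [IsProbabilityMeasure ν] (hinv : Measure.map T ν = ν) (m : ℕ)
    {u : X → ℝ≥0∞} (hu : Measurable u) :
    ∫⁻ x, u (T^[m] x) ∂ν = ∫⁻ x, u x ∂ν := by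
  rw [← lintegral_map hu (hTm.iterate m), map_iterate_invariant hTm hinv m]

end AuxLemmas

section Mid
variable {X : Type*} [MeasurableSpace X]

lemma key_chi_le (T : X → X) (hTm : Measurable T)
    (φ : ℕ → X → ℝ) (hmeas : ∀ m, 1 ≤ m → Measurable (φ m))
    (hpos : ∀ m x, 1 ≤ m → 0 ≤ φ m x)
    (hsubadd : ∀ m n' : ℕ, 1 ≤ m → 1 ≤ n' → ∀ x, φ (n' + m) x ≤ φ n' x * φ m (T^[n'] x))
    (Cb : ℕ → ℝ) (hCb0 : ∀ m, 1 ≤ m → 0 ≤ Cb m)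
    (hCb : ∀ m, 1 ≤ m → ∀ x, elog (φ m x) ≤ (Cb m : EReal))
    (ν : Measure X) [IsProbabilityMeasure ν] (hinv : Measure.map T ν = ν)
    {n : ℕ} (hn : 1 ≤ n) :
    ∀ j : ℕ, 1 ≤ j →
      eint ν (fun x => elog (φ (j * n) x)) ≤ (j : EReal) * eint ν (fun x => elog (φ n x)) := by
  intro j hj
  induction j with
  | zero => omega
  | succ j ih =>
    rcases Nat.lt_or_ge 1 (j+1) with hj1 | hj1
    · -- j ≥ 1
      have hj' : 1 ≤ j := by omega
      have ihj := ih hj'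
      have hjn : 1 ≤ j * n := Nat.one_le_iff_ne_zero.2 (Nat.mul_ne_zero (by omega) (by omega))
      have hjnn : 1 ≤ j * n + n := by omega
      set C' : ℝ := Cb (j * n) with hC'
      set C : ℝ := Cb n with hCdef
      have hC'0 : 0 ≤ C' := hCb0 _ hjn
      have hC0 : 0 ≤ C := hCb0 _ hn
      set g1 : X → EReal := fun x => elog (φ (j * n) x) with hg1
      set g2 : X → EReal := fun x => elog (φ n (T^[j*n] x)) with hg2
      set f : X → EReal := fun x => elog (φ (j*n + n) x) with hf
      have hm1 : Measurable g1 := measurable_elog.comp (hmeas _ hjn)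
      have hm2 : Measurable g2 :=
        (measurable_elog.comp (hmeas _ hn)).comp (hTm.iterate (j*n))
      have hmf : Measurable f := measurable_elog.comp (hmeas _ hjnn)
      have hg1b : ∀ x, g1 x ≤ (C' : EReal) := fun x => hCb _ hjn x
      have hg2b : ∀ x, g2 x ≤ (C : EReal) := fun x => hCb _ hn _
      have hfg : ∀ x, f x ≤ g1 x + g2 x := by
        intro x
        have h1 : φ (j*n + n) x ≤ φ (j*n) x * φ n (T^[j*n] x) := hsubadd n (j*n) hn hjn x
        calc f x ≤ elog (φ (j*n) x * φ n (T^[j*n] x)) := elog_mono h1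
        _ = g1 x + g2 x := elog_mul (hpos _ x hjn)
      have hfb : ∀ x, f x ≤ ((C' + C : ℝ) : EReal) := by
        intro x
        calc f x ≤ g1 x + g2 x := hfg x
        _ ≤ (C' : EReal) + (C : EReal) := add_le_add (hg1b x) (hg2b x)
        _ = ((C' + C : ℝ) : EReal) := (EReal.coe_add _ _).symm
      -- representations
      have hrepf := eint_eq ν hmf (by linarith) hfb
      have hrep1 := eint_eq ν hm1 hC'0 hg1b
      have hrep2 := eint_eq ν (f := fun x => elog (φ n x))
        (measurable_elog.comp (hmeas _ hn)) hC0 (fun x => hCb _ hn x)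
      set A := ∫⁻ x, ((C' : EReal) - g1 x).posPart ∂ν with hA
      set B := ∫⁻ x, ((C : EReal) - elog (φ n x)).posPart ∂ν with hB
      have hBcomp : ∫⁻ x, ((C : EReal) - g2 x).posPart ∂ν = B := by
        rw [hB]
        exact lintegral_iterate_comp hTm hinv (j*n)
          ((EReal.measurable_constSubPosPart C).comp (measurable_elog.comp (hmeas _ hn)))
      have hABle : A + B ≤ ∫⁻ x, (((C' + C : ℝ) : EReal) - f x).posPart ∂ν := by
        have hadd : A + B
            = ∫⁻ x, (((C' : EReal) - g1 x).posPart + ((C : EReal) - g2 x).posPart) ∂ν := by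
          rw [hA, ← hBcomp]
          exact (lintegral_add_left ((EReal.measurable_constSubPosPart C').comp hm1)
            (fun x => ((C : EReal) - g2 x).posPart)).symm
        rw [hadd]
        apply lintegral_mono
        intro x
        calc ((C' : EReal) - g1 x).posPart + ((C : EReal) - g2 x).posPart
            = (((C' + C : ℝ) : EReal) - (g1 x + g2 x)).posPart :=
              (posPart_add_split (hg1b x) (hg2b x)).symm
          _ ≤ (((C' + C : ℝ) : EReal) - f x).posPart :=
              EReal.posPart_mono (EReal.sub_le_sub le_rfl (hfg x))
      have step1 : eint ν f ≤ ((C' + C : ℝ) : EReal) - ((A + B : ℝ≥0∞) : EReal) := by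
        rw [hrepf]
        exact EReal.sub_le_sub le_rfl (EReal.coe_ennreal_le_coe_ennreal_iff.2 hABle)
      have step2 : ((C' + C : ℝ) : EReal) - ((A + B : ℝ≥0∞) : EReal)
          = eint ν g1 + eint ν (fun x => elog (φ n x)) := by
        rw [coe_sub_coe_add, hrep1, hrep2]
      have step3 : eint ν g1 + eint ν (fun x => elog (φ n x))
          ≤ ((j : EReal) + 1) * eint ν (fun x => elog (φ n x)) := by
        rw [ereal_succ_mul hj']
        exact add_le_add ihj le_rfl
      have hfinal : eint ν f ≤ ((j : EReal) + 1) * eint ν (fun x => elog (φ n x)) :=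
        le_trans step1 (le_of_eq_of_le step2 step3)
      have hcast : ((j + 1 : ℕ) : EReal) = (j : EReal) + 1 := by push_cast; ring
      have hidx : (j + 1) * n = j * n + n := by ring
      rw [hidx, hcast]
      exact hfinal
    · -- j + 1 = 1
      have : j = 0 := by omega
      subst this
      simp [one_mul]

lemma chi_le_div (T : X → X) (hTm : Measurable T)
    (φ : ℕ → X → ℝ) (hmeas : ∀ m, 1 ≤ m → Measurable (φ m))
    (hpos : ∀ m x, 1 ≤ m → 0 ≤ φ m x)
    (hsubadd : ∀ m n' : ℕ, 1 ≤ m → 1 ≤ n' → ∀ x, φ (n' + m) x ≤ φ n' x * φ m (T^[n'] x))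
    (Cb : ℕ → ℝ) (hCb0 : ∀ m, 1 ≤ m → 0 ≤ Cb m)
    (hCb : ∀ m, 1 ≤ m → ∀ x, elog (φ m x) ≤ (Cb m : EReal))
    (ν : Measure X) [IsProbabilityMeasure ν] (hinv : Measure.map T ν = ν)
    (χν : EReal)
    (hlim : Tendsto (fun m : ℕ => eint ν (fun x => elog (φ m x)) / (m : EReal)) atTop (𝓝 χν))
    {n : ℕ} (hn : 1 ≤ n) {s : ℝ} (hs : eint ν (fun x => elog (φ n x)) ≤ (s : EReal)) :
    χν ≤ ((s / n : ℝ) : EReal) := by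
  have hnpos : 0 < n := hn
  have hmulT : Tendsto (fun j : ℕ => j * n) atTop atTop :=
    Filter.tendsto_atTop_atTop.2 fun b => ⟨b, fun a ha =>
      le_trans ha (Nat.le_mul_of_pos_right a hnpos)⟩
  have hcomp : Tendsto (fun j : ℕ => eint ν (fun x => elog (φ (j * n) x)) / ((j * n : ℕ) : EReal))
      atTop (𝓝 χν) := hlim.comp hmulT
  apply le_of_tendsto hcomp
  filter_upwards [eventually_ge_atTop 1] with j hj
  have hjn1 : 1 ≤ j * n := Nat.one_le_iff_ne_zero.2 (Nat.mul_ne_zero (by omega) (by omega))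
  have h1 : eint ν (fun x => elog (φ (j * n) x)) ≤ (j : EReal) * eint ν (fun x => elog (φ n x)) :=
    key_chi_le T hTm φ hmeas hpos hsubadd Cb hCb0 hCb ν hinv hn j hj
  have hjposE : (0 : EReal) < (j : EReal) := by exact_mod_cast Nat.cast_pos.2 (by omega : 0 < j)
  have h2 : (j : EReal) * eint ν (fun x => elog (φ n x)) ≤ ((j * s : ℝ) : EReal) := by
    set a := eint ν (fun x => elog (φ n x)) with ha
    clear_value a
    induction a with
    | bot => rw [EReal.mul_bot_of_pos hjposE]; exact bot_le
    | coe r =>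
      rw [← EReal.coe_coe_eq_natCast, ← EReal.coe_mul, EReal.coe_le_coe_iff]
      have hr : r ≤ s := EReal.coe_le_coe_iff.1 hs
      have hj0 : (0:ℝ) ≤ (j:ℝ) := by positivity
      nlinarith
    | top => exact absurd hs (by simp)
  have h3 : eint ν (fun x => elog (φ (j * n) x)) ≤ ((j * s : ℝ) : EReal) := le_trans h1 h2
  have h4 : eint ν (fun x => elog (φ (j * n) x)) / ((j * n : ℕ) : EReal)
      ≤ ((j * s : ℝ) : EReal) / ((j * n : ℕ) : EReal) := by
    apply EReal.div_le_div_right_of_nonneg _ h3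
    exact_mod_cast Nat.cast_nonneg _
  refine le_trans h4 (le_of_eq ?_)
  rw [← EReal.coe_coe_eq_natCast, ← EReal.coe_div, EReal.coe_eq_coe_iff]
  have hj0 : (0:ℝ) < (j:ℝ) := by exact_mod_cast (by omega : 0 < j)
  have hn0 : (0:ℝ) < (n:ℝ) := by exact_mod_cast hnpos
  push_cast
  field_simp

end Mid


/-- if μ is a weak-* accumulation point of equilibrium states (μ_t) as
t → ∞, then χ(μ,Φ) = lim_{t→∞} χ(μ_t,Φ). -/
theorem lyapunov_exponents_of_equilibrium_states_tendsto
    {X : Type*} [MetricSpace X] [CompactSpace X] [Nonempty X]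
    [MeasurableSpace X] [BorelSpace X]
    (T : X → X) (hT : Continuous T)
    (φ : ℕ → X → ℝ) (hφ : SubadditivePotential T φ)
    -- metric entropies: nonnegative, bounded (finite topological entropy), and
    -- upper semi-continuous on the set of invariant measures
    (h : ProbabilityMeasure X → ℝ) (hh0 : ∀ μ, 0 ≤ h μ)
    (htop : ∃ H : ℝ, ∀ μ : ProbabilityMeasure X,
      Measure.map T (μ : Measure X) = (μ : Measure X) → h μ ≤ H)
    (husc : UpperSemicontinuousOn h
      {μ : ProbabilityMeasure X | Measure.map T (μ : Measure X) = (μ : Measure X)})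
    -- Lyapunov exponents of invariant measures
    (χ : ProbabilityMeasure X → EReal)
    (hχ : ∀ μ : ProbabilityMeasure X, Measure.map T (μ : Measure X) = (μ : Measure X) →
      Tendsto (fun n : ℕ => eint (μ : Measure X) (fun x => elog (φ n x)) / (n : EReal))
        atTop (𝓝 (χ μ)))
    -- β(Φ) > -∞
    (β : EReal) (hβne : β ≠ ⊥)
    (hβ : Tendsto (fun n : ℕ => elog (⨆ x, φ n x) / (n : EReal)) atTop (𝓝 β))
    -- the topological pressure, via the variational principle, and equilibrium states
    (P : ℝ → ℝ)
    (hP : ∀ t ∈ Set.Ioi (0 : ℝ), (P t : EReal) =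
      sSup ((fun ν => (h ν : EReal) + (t : EReal) * χ ν) ''
        {ν : ProbabilityMeasure X | Measure.map T (ν : Measure X) = (ν : Measure X)}))
    (μt : ℝ → ProbabilityMeasure X)
    (hEq : ∀ t ∈ Set.Ioi (0 : ℝ),
      Measure.map T (μt t : Measure X) = (μt t : Measure X) ∧
      (h (μt t) : EReal) + (t : EReal) * χ (μt t) = (P t : EReal))
    -- μ_inf is a weak-* accumulation point of (μ_t) as t → ∞
    (μ_inf : ProbabilityMeasure X) (hacc : MapClusterPt μ_inf atTop μt) :
    Tendsto (fun t => χ (μt t)) atTop (𝓝 (χ μ_inf)) := by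
  obtain ⟨hcont, hpos, hsubadd⟩ := hφ
  obtain ⟨H, hH⟩ := htop
  have hTm : Measurable T := hT.measurable
  -- the set of invariant measures is closed
  have hSclosed : IsClosed
      {ν : ProbabilityMeasure X | Measure.map T (ν : Measure X) = (ν : Measure X)} := by
    have heqS : {ν : ProbabilityMeasure X | Measure.map T (ν : Measure X) = (ν : Measure X)}
        = {ν : ProbabilityMeasure X | ν.map hT.measurable.aemeasurable = ν} := by
      ext ν
      simp only [mem_setOf_eq]
      constructor
      · intro hν
        apply MeasureTheory.ProbabilityMeasure.toMeasure_injective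
        rw [MeasureTheory.ProbabilityMeasure.toMeasure_map]
        exact hν
      · intro hν
        have h2 := congrArg MeasureTheory.ProbabilityMeasure.toMeasure hν
        rwa [MeasureTheory.ProbabilityMeasure.toMeasure_map] at h2
    rw [heqS]
    exact isClosed_eq (MeasureTheory.ProbabilityMeasure.continuous_map hT) continuous_id
  -- μ_inf is invariant
  have hμinf_inv : Measure.map T (μ_inf : Measure X) = (μ_inf : Measure X) := by
    by_contra hne
    have hopen : {ν : ProbabilityMeasure X |
        Measure.map T (ν : Measure X) = (ν : Measure X)}ᶜ ∈ 𝓝 μ_inf :=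
      hSclosed.isOpen_compl.mem_nhds hne
    have hfreq := mapClusterPt_iff_frequently.1 hacc _ hopen
    have hev : ∀ᶠ t : ℝ in atTop, μt t ∈
        {ν : ProbabilityMeasure X | Measure.map T (ν : Measure X) = (ν : Measure X)} := by
      filter_upwards [eventually_gt_atTop 0] with t ht
      exact (hEq t ht).1
    obtain ⟨t, h1, h2⟩ := (hfreq.and_eventually hev).exists
    exact h1 h2
  have hH0 : (0:ℝ) ≤ H :=
    le_trans (hh0 (μt 1)) (hH _ (hEq 1 (by norm_num)).1)
  -- χ (μt t) is a real number for t > 0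
  have hχreal : ∀ t : ℝ, t ∈ Set.Ioi (0:ℝ) →
      ∃ r : ℝ, χ (μt t) = (r : EReal) ∧ h (μt t) + t * r = P t := by
    intro t ht
    obtain ⟨hinv, heq⟩ := hEq t ht
    have htpos : (0:ℝ) < t := ht
    set c := χ (μt t) with hc
    clear_value c
    induction c with
    | bot =>
      rw [EReal.coe_mul_bot_of_pos htpos, EReal.add_bot] at heq
      exact absurd heq.symm (EReal.coe_ne_bot _)
    | coe r =>
      refine ⟨r, rfl, ?_⟩
      rw [← EReal.coe_mul, ← EReal.coe_add] at heq
      exact EReal.coe_eq_coe_iff.1 heq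
    | top =>
      rw [EReal.coe_mul_top_of_pos htpos, EReal.coe_add_top] at heq
      exact absurd heq.symm (EReal.coe_ne_top _)
  -- variational inequality
  have hvar : ∀ t : ℝ, t ∈ Set.Ioi (0:ℝ) → ∀ ν : ProbabilityMeasure X,
      Measure.map T (ν : Measure X) = (ν : Measure X) →
      (h ν : EReal) + (t : EReal) * χ ν ≤ (P t : EReal) := by
    intro t ht ν hν
    rw [hP t ht]
    exact le_sSup ⟨ν, hν, rfl⟩
  -- monotonicity
  have hmono : ∀ s t : ℝ, s ∈ Set.Ioi (0:ℝ) → t ∈ Set.Ioi (0:ℝ) → s ≤ t →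
      χ (μt s) ≤ χ (μt t) := by
    intro s t hs ht hst
    rcases eq_or_lt_of_le hst with rfl | hlt
    · exact le_rfl
    obtain ⟨rs, hrs, hes⟩ := hχreal s hs
    obtain ⟨rt, hrt, het⟩ := hχreal t ht
    have h1 : h (μt t) + s * rt ≤ P s := by
      have := hvar s hs (μt t) (hEq t ht).1
      rw [hrt, ← EReal.coe_mul, ← EReal.coe_add] at this
      exact EReal.coe_le_coe_iff.1 this
    have h2 : h (μt s) + t * rs ≤ P t := by
      have := hvar t ht (μt s) (hEq s hs).1
      rw [hrs, ← EReal.coe_mul, ← EReal.coe_add] at this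
      exact EReal.coe_le_coe_iff.1 this
    rw [hrs, hrt, EReal.coe_le_coe_iff]
    nlinarith [hes, het, h1, h2, hlt]
  set L : EReal := ⨆ t : Set.Ioi (0:ℝ), χ (μt ↑t) with hLdef
  have hleL : ∀ t : ℝ, t ∈ Set.Ioi (0:ℝ) → χ (μt t) ≤ L := fun t ht =>
    le_iSup (fun t : Set.Ioi (0:ℝ) => χ (μt ↑t)) ⟨t, ht⟩
  have htendsL : Tendsto (fun t => χ (μt t)) atTop (𝓝 L) := by
    refine tendsto_order.2 ⟨?_, ?_⟩
    · intro b hb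
      obtain ⟨⟨t0, ht0⟩, hbt⟩ := lt_iSup_iff.1 hb
      filter_upwards [eventually_ge_atTop t0] with t ht
      exact lt_of_lt_of_le hbt (hmono t0 t ht0 (lt_of_lt_of_le ht0 ht) ht)
    · intro b hb
      filter_upwards [eventually_gt_atTop 0] with t ht
      exact lt_of_le_of_lt (hleL t ht) hb
  suffices hfin : χ μ_inf = L by rw [hfin]; exact htendsL
  have hup : χ μ_inf ≤ L := by
    have hvar1 : ∀ t : ℝ, t ∈ Set.Ioi (0:ℝ) →
        (h μ_inf : EReal) + (t : EReal) * χ μ_inf ≤ (P t : EReal) :=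
      fun t ht => hvar t ht μ_inf hμinf_inv
    set c := χ μ_inf with hc
    clear_value c
    induction c with
    | bot => exact bot_le
    | top =>
      exfalso
      have h1 := hvar1 1 (by norm_num)
      rw [EReal.coe_mul_top_of_pos one_pos, EReal.coe_add_top] at h1
      exact (EReal.coe_ne_top (P 1)) (top_le_iff.1 h1)
    | coe x =>
      rcases eq_or_ne L ⊤ with hLtop | hLtop
      · rw [hLtop]; exact le_top
      have hLnebot : L ≠ ⊥ := by
        intro hLbot
        obtain ⟨r1, hr1, _⟩ := hχreal 1 (by norm_num)
        have hle1 := hleL 1 (by norm_num)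
        rw [hr1, hLbot, le_bot_iff] at hle1
        exact (EReal.coe_ne_bot r1) hle1
      set l := L.toReal with hl
      have hLl : L = (l : EReal) := (EReal.coe_toReal hLtop hLnebot).symm
      rw [hLl, EReal.coe_le_coe_iff]
      by_contra hxl
      push_neg at hxl
      have hxl' : (0:ℝ) < x - l := by linarith
      set t := (H + 1) / (x - l) with htdef
      have htpos : (0:ℝ) < t := div_pos (by linarith) hxl'
      obtain ⟨rt, hrt, het⟩ := hχreal t htpos
      have hrtl : rt ≤ l := by
        have hle2 := hleL t htpos
        rw [hrt, hLl, EReal.coe_le_coe_iff] at hle2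
        exact hle2
      have h1 : h μ_inf + t * x ≤ P t := by
        have h3 := hvar1 t htpos
        rw [← EReal.coe_mul, ← EReal.coe_add] at h3
        exact EReal.coe_le_coe_iff.1 h3
      have hHt : h (μt t) ≤ H := hH _ (hEq t htpos).1
      have h2 : P t ≤ H + t * l := by
        rw [← het]
        nlinarith [mul_le_mul_of_nonneg_left hrtl htpos.le]
      have h3 : t * (x - l) ≤ H := by nlinarith [hh0 μ_inf]
      have h4 : t * (x - l) = H + 1 := div_mul_cancel₀ _ (ne_of_gt hxl')
      linarith
  have hdown : L ≤ χ μ_inf := by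
    have hkey : ∀ b : ℝ, χ μ_inf < (b : EReal) → L ≤ (b : EReal) := by
      intro b hbχ
      have hmeas : ∀ m, 1 ≤ m → Measurable (φ m) := fun m hm => (hcont m hm).measurable
      have hCex : ∀ m : ℕ, 1 ≤ m → ∃ C : ℝ, 0 ≤ C ∧ (∀ x, elog (φ m x) ≤ (C : EReal)) ∧
          ∀ (x : X) (k : ℕ), Real.log (max (φ m x) (Real.exp (-(k:ℝ)))) ≤ C := by
        intro m hm
        obtain ⟨z, _, hz'⟩ := isCompact_univ.exists_isMaxOn univ_nonempty
          (hcont m hm).continuousOn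
        have hz : ∀ x, φ m x ≤ φ m z := fun x => hz' (mem_univ x)
        set M := max (φ m z) 1 with hM
        have hM1 : (1:ℝ) ≤ M := le_max_right _ _
        have hM0 : (0:ℝ) < M := lt_of_lt_of_le one_pos hM1
        refine ⟨Real.log M, Real.log_nonneg hM1, ?_, ?_⟩
        · intro x
          exact elog_le_coe_log hM0 (le_trans (hz x) (le_max_left _ _))
        · intro x k
          apply Real.log_le_log (lt_of_lt_of_le (Real.exp_pos _) (le_max_right _ _))
          apply max_le (le_trans (hz x) (le_max_left _ _))
          exact le_trans (Real.exp_le_one_iff.2 (by simp)) hM1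
      choose! Cb hCb0 hCb1 hCb2 using hCex
      have hev := (hχ μ_inf hμinf_inv).eventually_lt_const hbχ
      obtain ⟨n, hnlt, hn1⟩ := (hev.and (eventually_ge_atTop 1)).exists
      have hnpos : 0 < n := hn1
      have hnR : (0:ℝ) < (n:ℝ) := by exact_mod_cast hnpos
      have hJlt : eint (μ_inf : Measure X) (fun x => elog (φ n x)) < ((b * n : ℝ) : EReal) := by
        have hEnpos : (0:EReal) < ((n:ℕ) : EReal) := by exact_mod_cast hnpos
        have hEnne : ((n:ℕ) : EReal) ≠ ⊤ := by
          rw [← EReal.coe_coe_eq_natCast]; exact EReal.coe_ne_top _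
        by_contra hge
        push_neg at hge
        have hble : (b : EReal)
            ≤ eint (μ_inf : Measure X) (fun x => elog (φ n x)) / ((n:ℕ) : EReal) := by
          apply (EReal.le_div_iff_mul_le hEnpos hEnne).2
          calc (b:EReal) * ((n:ℕ) : EReal) = ((b * n : ℝ) : EReal) := by
                norm_cast
          _ ≤ _ := hge
        exact absurd hnlt (not_lt.2 hble)
      set g : ℕ → X → ℝ := fun k x => Real.log (max (φ n x) (Real.exp (-(k:ℝ)))) with hgdef
      have hgcont : ∀ k, Continuous (g k) := by
        intro k
        apply Continuous.log (Continuous.max (hcont n hn1) continuous_const)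
        intro x
        exact ne_of_gt (lt_of_lt_of_le (Real.exp_pos _) (le_max_right _ _))
      have hgle : ∀ k x, elog (φ n x) ≤ ((g k x : ℝ) : EReal) := by
        intro k x
        rcases lt_or_ge 0 (φ n x) with hx | hx
        · rw [elog_coe_pos hx, EReal.coe_le_coe_iff]
          exact Real.log_le_log hx (le_max_left _ _)
        · rw [elog_nonpos hx]; exact bot_le
      have hgub : ∀ k x, g k x ≤ Cb n := fun k x => hCb2 n hn1 x k
      have hglb : ∀ (k : ℕ) (x : X), -(k:ℝ) ≤ g k x := by
        intro k x
        calc -(k:ℝ) = Real.log (Real.exp (-(k:ℝ))) := (Real.log_exp _).symm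
        _ ≤ g k x := Real.log_le_log (Real.exp_pos _) (le_max_right _ _)
      set v : ℕ → X → ℝ≥0∞ := fun k x => ENNReal.ofReal (Cb n - g k x) with hvdef
      set u : X → ℝ≥0∞ := fun x => ((Cb n : EReal) - elog (φ n x)).posPart with hudef
      have hvmeas : ∀ k, Measurable (v k) :=
        fun k => ENNReal.measurable_ofReal.comp ((continuous_const.sub (hgcont k)).measurable)
      have hvu : ∀ k x, v k x ≤ u x := by
        intro k x
        calc v k x = (((Cb n - g k x : ℝ) : EReal)).posPart := (EReal.posPart_coe _).symm
        _ ≤ u x := by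
            apply EReal.posPart_mono
            rw [EReal.coe_sub]
            exact EReal.sub_le_sub le_rfl (hgle k x)
      have hgmono : ∀ (k k' : ℕ), k ≤ k' → ∀ x, g k' x ≤ g k x := by
        intro k k' hk x
        apply Real.log_le_log (lt_of_lt_of_le (Real.exp_pos _) (le_max_right _ _))
        apply max_le (le_max_left _ _)
        refine le_trans (Real.exp_le_exp.2 ?_) (le_max_right _ _)
        have : (k:ℝ) ≤ (k':ℝ) := by exact_mod_cast hk
        linarith
      have hvmono : Monotone v := by
        intro k k' hk x
        exact ENNReal.ofReal_le_ofReal (by linarith [hgmono k k' hk x])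
      have hsupv : ∀ x, (⨆ k, v k x) = u x := by
        intro x
        rcases lt_or_ge 0 (φ n x) with hx | hx
        · set k0 : ℕ := ⌈-Real.log (φ n x)⌉₊ with hk0
          have hexp : Real.exp (-(k0:ℝ)) ≤ φ n x := by
            rw [← Real.exp_log hx]
            apply Real.exp_le_exp.2
            have := Nat.le_ceil (-Real.log (φ n x))
            linarith
          have hvk0 : v k0 x = u x := by
            rw [hvdef, hudef]
            simp only [hgdef]
            rw [max_eq_left hexp, elog_coe_pos hx, ← EReal.coe_sub, EReal.posPart_coe]
          exact le_antisymm (iSup_le fun k => hvu k x)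
            (hvk0 ▸ le_iSup (fun k => v k x) k0)
        · have hux : u x = ⊤ := by
            rw [hudef]
            simp only [elog_nonpos hx, EReal.coe_sub_bot]
            rfl
          rw [hux]
          apply ENNReal.eq_top_of_forall_nnreal_le
          intro r
          have hφ0 : φ n x ≤ Real.exp (-((⌈(r:ℝ)⌉₊ : ℕ):ℝ)) :=
            le_trans hx (Real.exp_pos _).le
          have hgval : g ⌈(r:ℝ)⌉₊ x = -((⌈(r:ℝ)⌉₊ : ℕ):ℝ) := by
            rw [hgdef]
            simp only []
            rw [max_eq_right hφ0, Real.log_exp]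
          have hrle : (r:ℝ) ≤ Cb n - g ⌈(r:ℝ)⌉₊ x := by
            rw [hgval]
            have h1 := Nat.le_ceil (r:ℝ)
            have h2 := hCb0 n hn1
            have h3 : ((⌈(r:ℝ)⌉₊ : ℕ):ℝ) = (⌈(r:ℝ)⌉₊ : ℝ) := rfl
            rw [h3]
            linarith
          calc (r : ℝ≥0∞) = ENNReal.ofReal (r:ℝ) := (ENNReal.ofReal_coe_nnreal).symm
          _ ≤ v ⌈(r:ℝ)⌉₊ x := ENNReal.ofReal_le_ofReal hrle
          _ ≤ ⨆ k, v k x := le_iSup (fun k => v k x) _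
      have hsupU : ∫⁻ x, u x ∂(μ_inf : Measure X)
          = ⨆ k, ∫⁻ x, v k x ∂(μ_inf : Measure X) := by
        rw [← lintegral_iSup hvmeas hvmono]
        exact lintegral_congr fun x => (hsupv x).symm
      have hvfin : ∀ (ρ : ProbabilityMeasure X) (k : ℕ),
          ∫⁻ x, v k x ∂(ρ : Measure X) ≠ ⊤ := by
        intro ρ k
        have hble : ∀ x, v k x ≤ ENNReal.ofReal (Cb n + k) := by
          intro x
          apply ENNReal.ofReal_le_ofReal
          have := hglb k x
          linarith
        have hb2 := lintegral_mono (μ := (ρ : Measure X)) hble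
        rw [lintegral_const] at hb2
        simp only [measure_univ, mul_one] at hb2
        exact ne_top_of_le_ne_top ENNReal.ofReal_ne_top hb2
      have hgint : ∀ (ρ : ProbabilityMeasure X) (k : ℕ),
          ∫ x, g k x ∂(ρ : Measure X) = Cb n - (∫⁻ x, v k x ∂(ρ : Measure X)).toReal := by
        intro ρ k
        have hIntg : Integrable (g k) (ρ : Measure X) := by
          have := (BoundedContinuousFunction.mkOfCompact ⟨g k, hgcont k⟩).integrable
            (μ := (ρ : Measure X))
          exact this
        have hnn : ∀ x, 0 ≤ Cb n - g k x := fun x => by linarith [hgub k x]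
        have hInt2 : Integrable (fun x => Cb n - g k x) (ρ : Measure X) :=
          (integrable_const (Cb n)).sub hIntg
        have h1 : ∫ x, (Cb n - g k x) ∂(ρ : Measure X)
            = (∫⁻ x, v k x ∂(ρ : Measure X)).toReal := by
          rw [integral_eq_lintegral_of_nonneg_ae (Filter.Eventually.of_forall hnn)
            hInt2.aestronglyMeasurable]
        have h2 : ∫ x, (Cb n - g k x) ∂(ρ : Measure X)
            = Cb n - ∫ x, g k x ∂(ρ : Measure X) := by
          rw [integral_sub (integrable_const _) hIntg, integral_const]
          simp
        linarith [h1, h2]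
      have hJrep : ∀ ρ : ProbabilityMeasure X,
          eint (ρ : Measure X) (fun x => elog (φ n x))
            = ((Cb n : ℝ) : EReal) - ((∫⁻ x, u x ∂(ρ : Measure X) : ℝ≥0∞) : EReal) :=
        fun ρ => eint_eq _ (f := fun x => elog (φ n x)) (measurable_elog.comp (hmeas n hn1))
          (hCb0 n hn1) (hCb1 n hn1)
      have hex : ∃ k : ℕ, ∫ x, g k x ∂(μ_inf : Measure X) < b * n := by
        set δ : ℝ := Cb n - b * n with hδdef
        rcases lt_or_ge δ 0 with hδneg | hδpos
        · refine ⟨0, ?_⟩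
          rw [hgint μ_inf 0]
          have htr : (0:ℝ) ≤ (∫⁻ x, v 0 x ∂(μ_inf : Measure X)).toReal := ENNReal.toReal_nonneg
          linarith
        · have hoflt : ENNReal.ofReal δ < ∫⁻ x, u x ∂(μ_inf : Measure X) := by
            have hJ := hJrep μ_inf
            rw [hJ] at hJlt
            rcases eq_or_ne (∫⁻ x, u x ∂(μ_inf : Measure X)) ⊤ with hUt | hUt
            · rw [hUt]; exact ENNReal.ofReal_lt_top
            · rw [coe_ennreal_eq hUt, ← EReal.coe_sub, EReal.coe_lt_coe_iff] at hJlt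
              rw [ENNReal.ofReal_lt_iff_lt_toReal hδpos hUt]
              linarith
          rw [hsupU] at hoflt
          obtain ⟨k, hk⟩ := lt_iSup_iff.1 hoflt
          refine ⟨k, ?_⟩
          rw [hgint μ_inf k]
          have hk2 : δ < (∫⁻ x, v k x ∂(μ_inf : Measure X)).toReal := by
            have hk3 := (ENNReal.toReal_lt_toReal ENNReal.ofReal_ne_top (hvfin μ_inf k)).2 hk
            rwa [ENNReal.toReal_ofReal hδpos] at hk3
          linarith
      obtain ⟨k, hkint⟩ := hex
      have hcontI : Continuous fun ρ : ProbabilityMeasure X => ∫ x, g k x ∂(ρ : Measure X) := by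
        have hc := MeasureTheory.ProbabilityMeasure.continuous_integral_boundedContinuousFunction
          (X := X) (BoundedContinuousFunction.mkOfCompact ⟨g k, hgcont k⟩)
        exact hc
      have hWopen : IsOpen {ρ : ProbabilityMeasure X | ∫ x, g k x ∂(ρ : Measure X) < b * n} :=
        isOpen_lt hcontI continuous_const
      have hfreq := mapClusterPt_iff_frequently.1 hacc _ (hWopen.mem_nhds hkint)
      by_contra hnot2
      push_neg at hnot2
      have hev2 : ∀ᶠ t : ℝ in atTop, (b : EReal) < χ (μt t) :=
        htendsL.eventually_const_lt hnot2
      obtain ⟨t, hWt, hbt, ht0⟩ :=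
        (hfreq.and_eventually (hev2.and (eventually_gt_atTop 0))).exists
      have hinvt := (hEq t ht0).1
      set s : ℝ := ∫ x, g k x ∂(μt t : Measure X) with hsdef
      have hslt : s < b * n := hWt
      have hsle : eint (μt t : Measure X) (fun x => elog (φ n x)) ≤ (s : EReal) := by
        rw [hJrep (μt t)]
        have hVle : ∫⁻ x, v k x ∂(μt t : Measure X) ≤ ∫⁻ x, u x ∂(μt t : Measure X) :=
          lintegral_mono fun x => hvu k x
        calc ((Cb n : ℝ) : EReal) - ((∫⁻ x, u x ∂(μt t : Measure X) : ℝ≥0∞) : EReal)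
            ≤ ((Cb n : ℝ) : EReal) - ((∫⁻ x, v k x ∂(μt t : Measure X) : ℝ≥0∞) : EReal) :=
              EReal.sub_le_sub le_rfl (EReal.coe_ennreal_le_coe_ennreal_iff.2 hVle)
        _ = (s : EReal) := by
            rw [coe_ennreal_eq (hvfin (μt t) k), ← EReal.coe_sub, EReal.coe_eq_coe_iff, hsdef,
              hgint (μt t) k]
      have hχle := chi_le_div T hTm φ hmeas hpos hsubadd
        Cb hCb0 hCb1 ((μt t : Measure X)) hinvt (χ (μt t)) (hχ (μt t) hinvt) hn1 hsle
      have hdiv : s / (n:ℝ) < b := (div_lt_iff₀ hnR).2 (by linarith)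
      exact absurd (lt_of_le_of_lt hχle (EReal.coe_lt_coe_iff.2 hdiv)) (not_lt.2 hbt.le)
    by_contra hnot
    push_neg at hnot
    obtain ⟨b, hb1, hb2⟩ := EReal.exists_between_coe_real hnot
    exact absurd (hkey b hb1) (not_le.2 hb2)
  exact le_antisymm hup hdown
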